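/- For every ε > 0 there exists a constant C = C(ε) such that the following holds for every n, every 3-uniform hypergraph H on n vertices, and every matching M of maximum size in H: the number of vertices v ∈ V(H) \ V(M) for which there are at least εn² pairs {E,F} of distinct edges of M such that L_v(EF) is isomorphic to B_{023} or to B_{033} is at most C. -/

import Mathlib

open Finset

/-- The bipartite graph `B₀₂₃` on vertex classes `Fin 3` and `Fin 3`, with edge set
`{x₁y₀, x₁y₁, x₂y₀, x₂y₁, x₂y₂}` (degree sequences `0,2,3` and `2,2,1`). -/
def B023 : Finset (Fin 3 × Fin 3) :=
  Finset.univ.filter fun p => p.1 = 2 ∨ (p.1 = 1 ∧ p.2 ≠ 2)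

/-- The bipartite graph `B₀₃₃` on vertex classes `Fin 3` and `Fin 3`: the two vertices
`≠ 0` of the first class are joined to all of the second class (degree sequences `0,3,3`
and `2,2,2`). -/
def B033 : Finset (Fin 3 × Fin 3) := Finset.univ.filter fun p => p.1 ≠ 0

/-- The link graph `L_v(EF)` of `v` (the bipartite graph on classes `E` and `F` in which
`a ∈ E` is joined to `b ∈ F` iff `{v,a,b} ∈ H`) is isomorphic to the bipartite graph with
edge set `B` on `Fin 3` and `Fin 3`. -/
def LinkIso {Vt : Type*} [DecidableEq Vt] (H : Finset (Finset Vt)) (v : Vt)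
    (E F : Finset Vt) (B : Finset (Fin 3 × Fin 3)) : Prop :=
  ∃ (g : Vt → Fin 3) (h : Vt → Fin 3),
    Set.BijOn g ↑E Set.univ ∧ Set.BijOn h ↑F Set.univ ∧
    ∀ a ∈ E, ∀ b ∈ F, (({v, a, b} : Finset Vt) ∈ H ↔ (g a, h b) ∈ B)

set_option linter.unusedSectionVars false

section Helpers
variable {Vt : Type} [DecidableEq Vt]

private lemma nem {v a : Vt} {s : Finset Vt} (hv : v ∉ s) (ha : a ∈ s) : v ≠ a :=
  fun h => hv (h ▸ ha)

private lemma dne {a b : Vt} {s t : Finset Vt} (hD : Disjoint s t) (ha : a ∈ s) (hb : b ∈ t) :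
    a ≠ b := fun h => (Finset.disjoint_left.mp hD ha) (h ▸ hb)

private lemma disj3 {v a y v' a' y' : Vt} (h1 : v ≠ v') (h2 : v ≠ a') (h3 : v ≠ y')
    (h4 : a ≠ v') (h5 : a ≠ a') (h6 : a ≠ y') (h7 : y ≠ v') (h8 : y ≠ a') (h9 : y ≠ y') :
    Disjoint ({v, a, y} : Finset Vt) ({v', a', y'} : Finset Vt) := by
  simp only [Finset.disjoint_left, Finset.mem_insert, Finset.mem_singleton]
  rintro x (rfl | rfl | rfl) (rfl | rfl | rfl) <;> simp_all

private lemma disjG {v a y : Vt} {G : Finset Vt} (h1 : v ∉ G) (h2 : a ∉ G) (h3 : y ∉ G) :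
    Disjoint G ({v, a, y} : Finset Vt) := by
  simp only [Finset.disjoint_right, Finset.mem_insert, Finset.mem_singleton]
  rintro x (rfl | rfl | rfl) <;> assumption

private lemma tri_ne {s t : Finset Vt} (hD : Disjoint s t) (hs : s.Nonempty) : s ≠ t := by
  rintro rfl
  exact hs.ne_empty (disjoint_self.mp hD)

private lemma extract {H : Finset (Finset Vt)} {v : Vt} {E F : Finset Vt}
    (h : LinkIso H v E F B023 ∨ LinkIso H v E F B033) :
    ∃ d ∈ E, ∃ s ∈ E, d ≠ s ∧ (∀ y ∈ F, ({v, d, y} : Finset Vt) ∈ H) ∧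
      ∃ z1 ∈ F, ∃ z2 ∈ F, z1 ≠ z2 ∧ ({v, s, z1} : Finset Vt) ∈ H ∧
        ({v, s, z2} : Finset Vt) ∈ H := by
  have getpre : ∀ (g : Vt → Fin 3) (S : Finset Vt), Set.BijOn g ↑S Set.univ →
      ∀ i : Fin 3, ∃ x ∈ S, g x = i := by
    intro g S hg i
    obtain ⟨x, hx, hgx⟩ := hg.2.2 (Set.mem_univ i)
    exact ⟨x, Finset.mem_coe.mp hx, hgx⟩
  rcases h with ⟨g, h, hg, hh, hiff⟩ | ⟨g, h, hg, hh, hiff⟩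
  · obtain ⟨d, hdE, hgd⟩ := getpre g E hg 2
    obtain ⟨s, hsE, hgs⟩ := getpre g E hg 1
    obtain ⟨z1, hz1, hhz1⟩ := getpre h F hh 0
    obtain ⟨z2, hz2, hhz2⟩ := getpre h F hh 1
    refine ⟨d, hdE, s, hsE, ?_, ?_, z1, hz1, z2, hz2, ?_, ?_, ?_⟩
    · rintro rfl; rw [hgd] at hgs; exact absurd hgs (by decide)
    · intro y hy
      exact (hiff d hdE y hy).mpr (Finset.mem_filter.mpr ⟨Finset.mem_univ _, Or.inl hgd⟩)
    · rintro rfl; rw [hhz1] at hhz2; exact absurd hhz2 (by decide)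
    · exact (hiff s hsE z1 hz1).mpr (Finset.mem_filter.mpr ⟨Finset.mem_univ _,
        Or.inr ⟨hgs, by rw [show (g s, h z1).2 = h z1 from rfl, hhz1]; decide⟩⟩)
    · exact (hiff s hsE z2 hz2).mpr (Finset.mem_filter.mpr ⟨Finset.mem_univ _,
        Or.inr ⟨hgs, by rw [show (g s, h z2).2 = h z2 from rfl, hhz2]; decide⟩⟩)
  · obtain ⟨d, hdE, hgd⟩ := getpre g E hg 1
    obtain ⟨s, hsE, hgs⟩ := getpre g E hg 2
    obtain ⟨z1, hz1, hhz1⟩ := getpre h F hh 0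
    obtain ⟨z2, hz2, hhz2⟩ := getpre h F hh 1
    refine ⟨d, hdE, s, hsE, ?_, ?_, z1, hz1, z2, hz2, ?_, ?_, ?_⟩
    · rintro rfl; rw [hgd] at hgs; exact absurd hgs (by decide)
    · intro y hy
      exact (hiff d hdE y hy).mpr (Finset.mem_filter.mpr ⟨Finset.mem_univ _,
        by rw [show (g d, h y).1 = g d from rfl, hgd]; decide⟩)
    · rintro rfl; rw [hhz1] at hhz2; exact absurd hhz2 (by decide)
    · exact (hiff s hsE z1 hz1).mpr (Finset.mem_filter.mpr ⟨Finset.mem_univ _,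
        by rw [show (g s, h z1).1 = g s from rfl, hgs]; decide⟩)
    · exact (hiff s hsE z2 hz2).mpr (Finset.mem_filter.mpr ⟨Finset.mem_univ _,
        by rw [show (g s, h z2).1 = g s from rfl, hgs]; decide⟩)


private lemma augment {H M : Finset (Finset Vt)} (h3 : ∀ e ∈ H, e.card = 3)
    (hMH : M ⊆ H) (hdisj : (M : Set (Finset Vt)).PairwiseDisjoint id)
    {E1 E2 E3 F1 F2 : Finset Vt}
    (hE1 : E1 ∈ M) (hE2 : E2 ∈ M) (hE3 : E3 ∈ M) (hF1 : F1 ∈ M) (hF2 : F2 ∈ M)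
    (nE12 : E1 ≠ E2) (nE13 : E1 ≠ E3) (nE23 : E2 ≠ E3)
    (nE1F1 : E1 ≠ F1) (nE1F2 : E1 ≠ F2) (nE2F1 : E2 ≠ F1) (nE2F2 : E2 ≠ F2)
    (nE3F1 : E3 ≠ F1) (nE3F2 : E3 ≠ F2) (nF12 : F1 ≠ F2)
    {v11 v12 v21 v22 v31 v32 : Vt}
    (w1 : v11 ≠ v12) (w2 : v11 ≠ v21) (w3 : v11 ≠ v22) (w4 : v11 ≠ v31) (w5 : v11 ≠ v32)
    (w6 : v12 ≠ v21) (w7 : v12 ≠ v22) (w8 : v12 ≠ v31) (w9 : v12 ≠ v32)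
    (w10 : v21 ≠ v22) (w11 : v21 ≠ v31) (w12 : v21 ≠ v32)
    (w13 : v22 ≠ v31) (w14 : v22 ≠ v32) (w15 : v31 ≠ v32)
    (u11 : ∀ G ∈ M, v11 ∉ G) (u12 : ∀ G ∈ M, v12 ∉ G) (u21 : ∀ G ∈ M, v21 ∉ G)
    (u22 : ∀ G ∈ M, v22 ∉ G) (u31 : ∀ G ∈ M, v31 ∉ G) (u32 : ∀ G ∈ M, v32 ∉ G)
    (g11 : LinkIso H v11 E1 F1 B023 ∨ LinkIso H v11 E1 F1 B033)
    (g12 : LinkIso H v12 E1 F2 B023 ∨ LinkIso H v12 E1 F2 B033)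
    (g21 : LinkIso H v21 E2 F1 B023 ∨ LinkIso H v21 E2 F1 B033)
    (g22 : LinkIso H v22 E2 F2 B023 ∨ LinkIso H v22 E2 F2 B033)
    (g31 : LinkIso H v31 E3 F1 B023 ∨ LinkIso H v31 E3 F1 B033)
    (g32 : LinkIso H v32 E3 F2 B023 ∨ LinkIso H v32 E3 F2 B033) :
    ∃ M', M' ⊆ H ∧ (M' : Set (Finset Vt)).PairwiseDisjoint id ∧ M.card < M'.card := by
  classical
  have dis : ∀ {G G' : Finset Vt}, G ∈ M → G' ∈ M → G ≠ G' → Disjoint G G' :=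
    fun hG hG' hne => hdisj (Finset.mem_coe.mpr hG) (Finset.mem_coe.mpr hG') hne
  -- extract link data
  obtain ⟨d11, hd11, s11, hs11, hds11, dom11, z11a, hz11a, z11b, hz11b, hz11ne, e11a, e11b⟩ :=
    extract g11
  obtain ⟨d12, hd12, s12, hs12, hds12, dom12, z12a, hz12a, z12b, hz12b, hz12ne, e12a, e12b⟩ :=
    extract g12
  obtain ⟨d21, hd21, s21, hs21, hds21, dom21, z21a, hz21a, z21b, hz21b, hz21ne, e21a, e21b⟩ :=
    extract g21
  obtain ⟨d22, hd22, s22, hs22, hds22, dom22, z22a, hz22a, z22b, hz22b, hz22ne, e22a, e22b⟩ :=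
    extract g22
  obtain ⟨d31, hd31, s31, hs31, hds31, dom31, z31a, hz31a, z31b, hz31b, hz31ne, e31a, e31b⟩ :=
    extract g31
  obtain ⟨d32, hd32, s32, hs32, hds32, dom32, z32a, hz32a, z32b, hz32b, hz32ne, e32a, e32b⟩ :=
    extract g32
  -- choose second E-vertices in each column
  have ha12ex : ∃ a ∈ E1, a ≠ d11 ∧ ({v12, a, z12a} : Finset Vt) ∈ H ∧
      ({v12, a, z12b} : Finset Vt) ∈ H := by
    by_cases hc : d12 = d11
    · exact ⟨s12, hs12, fun h => hds12.symm (h.trans hc.symm), e12a, e12b⟩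
    · exact ⟨d12, hd12, hc, dom12 _ hz12a, dom12 _ hz12b⟩
  obtain ⟨a12, ha12E, ha12d, e12H1, e12H2⟩ := ha12ex
  have ha21ex : ∃ a ∈ E2, a ≠ d22 ∧ ({v21, a, z21a} : Finset Vt) ∈ H ∧
      ({v21, a, z21b} : Finset Vt) ∈ H := by
    by_cases hc : d21 = d22
    · exact ⟨s21, hs21, fun h => hds21.symm (h.trans hc.symm), e21a, e21b⟩
    · exact ⟨d21, hd21, hc, dom21 _ hz21a, dom21 _ hz21b⟩
  obtain ⟨a21, ha21E, ha21d, e21H1, e21H2⟩ := ha21ex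
  have ha32ex : ∃ a ∈ E3, a ≠ d31 ∧ ({v32, a, z32a} : Finset Vt) ∈ H ∧
      ({v32, a, z32b} : Finset Vt) ∈ H := by
    by_cases hc : d32 = d31
    · exact ⟨s32, hs32, fun h => hds32.symm (h.trans hc.symm), e32a, e32b⟩
    · exact ⟨d32, hd32, hc, dom32 _ hz32a, dom32 _ hz32b⟩
  obtain ⟨a32, ha32E, ha32d, e32H1, e32H2⟩ := ha32ex
  -- row F1 : y-choices
  have cardF1 : F1.card = 3 := h3 F1 (hMH hF1)
  have cardF2 : F2.card = 3 := h3 F2 (hMH hF2)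
  have hee2 : (F1.erase z21a).card = 2 := by rw [Finset.card_erase_of_mem hz21a, cardF1]
  obtain ⟨y11, y31, hy1131, hpair⟩ := Finset.card_eq_two.mp hee2
  have hy11e : y11 ∈ F1.erase z21a := by rw [hpair]; exact Finset.mem_insert_self _ _
  have hy31e : y31 ∈ F1.erase z21a := by rw [hpair]; simp
  have hy11F : y11 ∈ F1 := Finset.mem_of_mem_erase hy11e
  have hy31F : y31 ∈ F1 := Finset.mem_of_mem_erase hy31e
  have hy11ne : y11 ≠ z21a := Finset.ne_of_mem_erase hy11e
  have hy31ne : y31 ≠ z21a := Finset.ne_of_mem_erase hy31e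
  -- row F2 : y-choices
  have hy32ex : ∃ y ∈ F2, y ≠ z12a ∧ ({v32, a32, y} : Finset Vt) ∈ H := by
    by_cases hc : z32a = z12a
    · exact ⟨z32b, hz32b, fun h => hz32ne.symm (h.trans hc.symm), e32H2⟩
    · exact ⟨z32a, hz32a, hc, e32H1⟩
  obtain ⟨y32, hy32F, hy3212, e32H⟩ := hy32ex
  have hee1 : ((F2.erase z12a).erase y32).card = 1 := by
    rw [Finset.card_erase_of_mem (Finset.mem_erase.mpr ⟨hy3212, hy32F⟩),
        Finset.card_erase_of_mem hz12a, cardF2]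
  obtain ⟨y22, hy22⟩ := Finset.card_eq_one.mp hee1
  have hy22m : y22 ∈ (F2.erase z12a).erase y32 := by rw [hy22]; simp
  have hy22ne32 : y22 ≠ y32 := (Finset.mem_erase.mp hy22m).1
  have hy22m2 : y22 ∈ F2.erase z12a := (Finset.mem_erase.mp hy22m).2
  have hy22ne12 : y22 ≠ z12a := (Finset.mem_erase.mp hy22m2).1
  have hy22F : y22 ∈ F2 := (Finset.mem_erase.mp hy22m2).2
  -- the six new edges
  set e11 : Finset Vt := {v11, d11, y11} with he11def
  set e12 : Finset Vt := {v12, a12, z12a} with he12def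
  set e21 : Finset Vt := {v21, a21, z21a} with he21def
  set e22 : Finset Vt := {v22, d22, y22} with he22def
  set e31 : Finset Vt := {v31, d31, y31} with he31def
  set e32 : Finset Vt := {v32, a32, y32} with he32def
  have e11H : e11 ∈ H := dom11 y11 hy11F
  have e12H : e12 ∈ H := e12H1
  have e21H : e21 ∈ H := e21H1
  have e22H : e22 ∈ H := dom22 y22 hy22F
  have e31H : e31 ∈ H := dom31 y31 hy31F
  have e32Hm : e32 ∈ H := e32H
  -- disjointness between the matching edges used
  have DE12 := dis hE1 hE2 nE12
  have DE13 := dis hE1 hE3 nE13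
  have DE23 := dis hE2 hE3 nE23
  have DE1F1 := dis hE1 hF1 nE1F1
  have DE1F2 := dis hE1 hF2 nE1F2
  have DE2F1 := dis hE2 hF1 nE2F1
  have DE2F2 := dis hE2 hF2 nE2F2
  have DE3F1 := dis hE3 hF1 nE3F1
  have DE3F2 := dis hE3 hF2 nE3F2
  have DF12 := dis hF1 hF2 nF12
  -- pairwise disjointness of new edges
  have D12 : Disjoint e11 e12 := disj3 w1 (nem (u11 E1 hE1) ha12E) (nem (u11 F2 hF2) hz12a)
    (nem (u12 E1 hE1) hd11).symm ha12d.symm (dne DE1F2 hd11 hz12a)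
    (nem (u12 F1 hF1) hy11F).symm (dne DE1F1 ha12E hy11F).symm (dne DF12 hy11F hz12a)
  have D13 : Disjoint e11 e21 := disj3 w2 (nem (u11 E2 hE2) ha21E) (nem (u11 F1 hF1) hz21a)
    (nem (u21 E1 hE1) hd11).symm (dne DE12 hd11 ha21E) (dne DE1F1 hd11 hz21a)
    (nem (u21 F1 hF1) hy11F).symm (dne DE2F1 ha21E hy11F).symm hy11ne
  have D14 : Disjoint e11 e22 := disj3 w3 (nem (u11 E2 hE2) hd22) (nem (u11 F2 hF2) hy22F)
    (nem (u22 E1 hE1) hd11).symm (dne DE12 hd11 hd22) (dne DE1F2 hd11 hy22F)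
    (nem (u22 F1 hF1) hy11F).symm (dne DE2F1 hd22 hy11F).symm (dne DF12 hy11F hy22F)
  have D15 : Disjoint e11 e31 := disj3 w4 (nem (u11 E3 hE3) hd31) (nem (u11 F1 hF1) hy31F)
    (nem (u31 E1 hE1) hd11).symm (dne DE13 hd11 hd31) (dne DE1F1 hd11 hy31F)
    (nem (u31 F1 hF1) hy11F).symm (dne DE3F1 hd31 hy11F).symm hy1131
  have D16 : Disjoint e11 e32 := disj3 w5 (nem (u11 E3 hE3) ha32E) (nem (u11 F2 hF2) hy32F)
    (nem (u32 E1 hE1) hd11).symm (dne DE13 hd11 ha32E) (dne DE1F2 hd11 hy32F)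
    (nem (u32 F1 hF1) hy11F).symm (dne DE3F1 ha32E hy11F).symm (dne DF12 hy11F hy32F)
  have D23 : Disjoint e12 e21 := disj3 w6 (nem (u12 E2 hE2) ha21E) (nem (u12 F1 hF1) hz21a)
    (nem (u21 E1 hE1) ha12E).symm (dne DE12 ha12E ha21E) (dne DE1F1 ha12E hz21a)
    (nem (u21 F2 hF2) hz12a).symm (dne DE2F2 ha21E hz12a).symm (dne DF12 hz21a hz12a).symm
  have D24 : Disjoint e12 e22 := disj3 w7 (nem (u12 E2 hE2) hd22) (nem (u12 F2 hF2) hy22F)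
    (nem (u22 E1 hE1) ha12E).symm (dne DE12 ha12E hd22) (dne DE1F2 ha12E hy22F)
    (nem (u22 F2 hF2) hz12a).symm (dne DE2F2 hd22 hz12a).symm hy22ne12.symm
  have D25 : Disjoint e12 e31 := disj3 w8 (nem (u12 E3 hE3) hd31) (nem (u12 F1 hF1) hy31F)
    (nem (u31 E1 hE1) ha12E).symm (dne DE13 ha12E hd31) (dne DE1F1 ha12E hy31F)
    (nem (u31 F2 hF2) hz12a).symm (dne DE3F2 hd31 hz12a).symm (dne DF12 hy31F hz12a).symm
  have D26 : Disjoint e12 e32 := disj3 w9 (nem (u12 E3 hE3) ha32E) (nem (u12 F2 hF2) hy32F)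
    (nem (u32 E1 hE1) ha12E).symm (dne DE13 ha12E ha32E) (dne DE1F2 ha12E hy32F)
    (nem (u32 F2 hF2) hz12a).symm (dne DE3F2 ha32E hz12a).symm hy3212.symm
  have D34 : Disjoint e21 e22 := disj3 w10 (nem (u21 E2 hE2) hd22) (nem (u21 F2 hF2) hy22F)
    (nem (u22 E2 hE2) ha21E).symm ha21d (dne DE2F2 ha21E hy22F)
    (nem (u22 F1 hF1) hz21a).symm (dne DE2F1 hd22 hz21a).symm (dne DF12 hz21a hy22F)
  have D35 : Disjoint e21 e31 := disj3 w11 (nem (u21 E3 hE3) hd31) (nem (u21 F1 hF1) hy31F)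
    (nem (u31 E2 hE2) ha21E).symm (dne DE23 ha21E hd31) (dne DE2F1 ha21E hy31F)
    (nem (u31 F1 hF1) hz21a).symm (dne DE3F1 hd31 hz21a).symm hy31ne.symm
  have D36 : Disjoint e21 e32 := disj3 w12 (nem (u21 E3 hE3) ha32E) (nem (u21 F2 hF2) hy32F)
    (nem (u32 E2 hE2) ha21E).symm (dne DE23 ha21E ha32E) (dne DE2F2 ha21E hy32F)
    (nem (u32 F1 hF1) hz21a).symm (dne DE3F1 ha32E hz21a).symm (dne DF12 hz21a hy32F)
  have D45 : Disjoint e22 e31 := disj3 w13 (nem (u22 E3 hE3) hd31) (nem (u22 F1 hF1) hy31F)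
    (nem (u31 E2 hE2) hd22).symm (dne DE23 hd22 hd31) (dne DE2F1 hd22 hy31F)
    (nem (u31 F2 hF2) hy22F).symm (dne DE3F2 hd31 hy22F).symm (dne DF12 hy31F hy22F).symm
  have D46 : Disjoint e22 e32 := disj3 w14 (nem (u22 E3 hE3) ha32E) (nem (u22 F2 hF2) hy32F)
    (nem (u32 E2 hE2) hd22).symm (dne DE23 hd22 ha32E) (dne DE2F2 hd22 hy32F)
    (nem (u32 F2 hF2) hy22F).symm (dne DE3F2 ha32E hy22F).symm hy22ne32
  have D56 : Disjoint e31 e32 := disj3 w15 (nem (u31 E3 hE3) ha32E) (nem (u31 F2 hF2) hy32F)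
    (nem (u32 E3 hE3) hd31).symm ha32d.symm (dne DE3F2 hd31 hy32F)
    (nem (u32 F1 hF1) hy31F).symm (dne DE3F1 ha32E hy31F).symm (dne DF12 hy31F hy32F)
  -- assemble the new matching
  set S5 : Finset (Finset Vt) := {E1, E2, E3, F1, F2} with hS5def
  set N6 : Finset (Finset Vt) := {e11, e12, e21, e22, e31, e32} with hN6def
  set M' : Finset (Finset Vt) := (M \ S5) ∪ N6 with hM'def
  have hS5sub : S5 ⊆ M := by
    intro x hx
    simp only [hS5def, Finset.mem_insert, Finset.mem_singleton] at hx
    rcases hx with rfl | rfl | rfl | rfl | rfl <;> assumption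
  have hS5card : S5.card = 5 := by
    rw [hS5def]
    rw [Finset.card_insert_of_notMem (by
      simp only [Finset.mem_insert, Finset.mem_singleton]; push_neg
      exact ⟨nE12, nE13, nE1F1, nE1F2⟩)]
    rw [Finset.card_insert_of_notMem (by
      simp only [Finset.mem_insert, Finset.mem_singleton]; push_neg
      exact ⟨nE23, nE2F1, nE2F2⟩)]
    rw [Finset.card_insert_of_notMem (by
      simp only [Finset.mem_insert, Finset.mem_singleton]; push_neg
      exact ⟨nE3F1, nE3F2⟩)]
    rw [Finset.card_insert_of_notMem (by
      simp only [Finset.mem_singleton]; exact nF12)]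
    rw [Finset.card_singleton]
  have hne12 : e11 ≠ e12 := tri_ne D12 (Finset.insert_nonempty _ _)
  have hne13 : e11 ≠ e21 := tri_ne D13 (Finset.insert_nonempty _ _)
  have hne14 : e11 ≠ e22 := tri_ne D14 (Finset.insert_nonempty _ _)
  have hne15 : e11 ≠ e31 := tri_ne D15 (Finset.insert_nonempty _ _)
  have hne16 : e11 ≠ e32 := tri_ne D16 (Finset.insert_nonempty _ _)
  have hne23 : e12 ≠ e21 := tri_ne D23 (Finset.insert_nonempty _ _)
  have hne24 : e12 ≠ e22 := tri_ne D24 (Finset.insert_nonempty _ _)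
  have hne25 : e12 ≠ e31 := tri_ne D25 (Finset.insert_nonempty _ _)
  have hne26 : e12 ≠ e32 := tri_ne D26 (Finset.insert_nonempty _ _)
  have hne34 : e21 ≠ e22 := tri_ne D34 (Finset.insert_nonempty _ _)
  have hne35 : e21 ≠ e31 := tri_ne D35 (Finset.insert_nonempty _ _)
  have hne36 : e21 ≠ e32 := tri_ne D36 (Finset.insert_nonempty _ _)
  have hne45 : e22 ≠ e31 := tri_ne D45 (Finset.insert_nonempty _ _)
  have hne46 : e22 ≠ e32 := tri_ne D46 (Finset.insert_nonempty _ _)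
  have hne56 : e31 ≠ e32 := tri_ne D56 (Finset.insert_nonempty _ _)
  have hN6card : N6.card = 6 := by
    rw [hN6def]
    rw [Finset.card_insert_of_notMem (by
      simp only [Finset.mem_insert, Finset.mem_singleton]; push_neg
      exact ⟨hne12, hne13, hne14, hne15, hne16⟩)]
    rw [Finset.card_insert_of_notMem (by
      simp only [Finset.mem_insert, Finset.mem_singleton]; push_neg
      exact ⟨hne23, hne24, hne25, hne26⟩)]
    rw [Finset.card_insert_of_notMem (by
      simp only [Finset.mem_insert, Finset.mem_singleton]; push_neg
      exact ⟨hne34, hne35, hne36⟩)]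
    rw [Finset.card_insert_of_notMem (by
      simp only [Finset.mem_insert, Finset.mem_singleton]; push_neg
      exact ⟨hne45, hne46⟩)]
    rw [Finset.card_insert_of_notMem (by
      simp only [Finset.mem_singleton]; exact hne56)]
    rw [Finset.card_singleton]
  have hMN : Disjoint (M \ S5) N6 := by
    rw [Finset.disjoint_right]
    intro e he hem
    have heM : e ∈ M := (Finset.mem_sdiff.mp hem).1
    simp only [hN6def, Finset.mem_insert, Finset.mem_singleton] at he
    rcases he with rfl | rfl | rfl | rfl | rfl | rfl
    · exact u11 _ heM (Finset.mem_insert_self _ _)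
    · exact u12 _ heM (Finset.mem_insert_self _ _)
    · exact u21 _ heM (Finset.mem_insert_self _ _)
    · exact u22 _ heM (Finset.mem_insert_self _ _)
    · exact u31 _ heM (Finset.mem_insert_self _ _)
    · exact u32 _ heM (Finset.mem_insert_self _ _)
  have hM'H : M' ⊆ H := by
    rw [hM'def]
    apply Finset.union_subset ((Finset.sdiff_subset).trans hMH)
    intro e he
    simp only [hN6def, Finset.mem_insert, Finset.mem_singleton] at he
    rcases he with rfl | rfl | rfl | rfl | rfl | rfl
    exacts [e11H, e12H, e21H, e22H, e31H, e32Hm]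
  have hM'card : M'.card = M.card + 1 := by
    have h5le : 5 ≤ M.card := hS5card ▸ Finset.card_le_card hS5sub
    rw [hM'def, Finset.card_union_of_disjoint hMN, Finset.card_sdiff_of_subset hS5sub, hS5card, hN6card]
    omega
  have hM'disj : (M' : Set (Finset Vt)).PairwiseDisjoint id := by
    rw [hM'def, Finset.coe_union]
    rw [Set.pairwiseDisjoint_union]
    refine ⟨hdisj.subset (Finset.coe_subset.mpr Finset.sdiff_subset), ?_, ?_⟩
    · intro x hx y hy hxy
      simp only [hN6def, Finset.coe_insert, Set.mem_insert_iff, Finset.coe_singleton,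
        Set.mem_singleton_iff] at hx hy
      rcases hx with rfl | rfl | rfl | rfl | rfl | rfl <;>
        rcases hy with rfl | rfl | rfl | rfl | rfl | rfl <;>
        first
          | exact absurd rfl hxy
          | exact D12 | exact D13 | exact D14 | exact D15 | exact D16
          | exact D23 | exact D24 | exact D25 | exact D26
          | exact D34 | exact D35 | exact D36 | exact D45 | exact D46 | exact D56
          | exact D12.symm | exact D13.symm | exact D14.symm | exact D15.symm
          | exact D16.symm | exact D23.symm | exact D24.symm | exact D25.symm
          | exact D26.symm | exact D34.symm | exact D35.symm | exact D36.symm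
          | exact D45.symm | exact D46.symm | exact D56.symm
    · intro G hG e he hne
      obtain ⟨hGM, hGS⟩ := Finset.mem_sdiff.mp (Finset.mem_coe.mp hG)
      simp only [hS5def, Finset.mem_insert, Finset.mem_singleton] at hGS
      push_neg at hGS
      obtain ⟨q1, q2, q3, q4, q5⟩ := hGS
      have dG : ∀ {X : Finset Vt}, X ∈ M → G ≠ X → ∀ {x : Vt}, x ∈ X → x ∉ G :=
        fun {X} hX hnX {x} hx => Finset.disjoint_right.mp (dis hGM hX hnX) hx
      simp only [hN6def, Finset.coe_insert, Set.mem_insert_iff, Finset.coe_singleton,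
        Set.mem_singleton_iff] at he
      rcases he with rfl | rfl | rfl | rfl | rfl | rfl
      · exact disjG (u11 G hGM) (dG hE1 q1 hd11) (dG hF1 q4 hy11F)
      · exact disjG (u12 G hGM) (dG hE1 q1 ha12E) (dG hF2 q5 hz12a)
      · exact disjG (u21 G hGM) (dG hE2 q2 ha21E) (dG hF1 q4 hz21a)
      · exact disjG (u22 G hGM) (dG hE2 q2 hd22) (dG hF2 q5 hy22F)
      · exact disjG (u31 G hGM) (dG hE3 q3 hd31) (dG hF1 q4 hy31F)
      · exact disjG (u32 G hGM) (dG hE3 q3 ha32E) (dG hF2 q5 hy32F)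
  exact ⟨M', hM'H, hM'disj, by omega⟩

end Helpers

set_option maxHeartbeats 0 in
theorem stmt_13_aux (ε : ℝ) (hε : 0 < ε) (hε9 : ε ≤ 1/9) :
    ∃ C : ℕ, ∀ (Vt : Type) [Fintype Vt] [DecidableEq Vt] (H : Finset (Finset Vt)),
      (∀ e ∈ H, e.card = 3) →
      ∀ M ⊆ H, (M : Set (Finset Vt)).PairwiseDisjoint id →
      (∀ M' ⊆ H, (M' : Set (Finset Vt)).PairwiseDisjoint id → M'.card ≤ M.card) →
      {v : Vt | v ∉ M.biUnion id ∧
        ε * (Fintype.card Vt : ℝ)^2 ≤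
          (({S : Finset (Finset Vt) | S ⊆ M ∧ S.card = 2 ∧
            ∃ E ∈ S, ∃ F ∈ S, E ≠ F ∧
              (LinkIso H v E F B023 ∨ LinkIso H v E F B033)}.ncard : ℝ))}.ncard ≤ C := by
  refine ⟨⌈(3/ε)^6⌉₊, ?_⟩
  intro Vt _ _ H h3 M hMH hdisj hmax
  classical
  by_contra hcon
  push_neg at hcon
  set K : Finset Vt := Finset.univ.filter (fun v => v ∉ M.biUnion id ∧
      ε * (Fintype.card Vt : ℝ)^2 ≤
        (({S : Finset (Finset Vt) | S ⊆ M ∧ S.card = 2 ∧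
          ∃ E ∈ S, ∃ F ∈ S, E ≠ F ∧
            (LinkIso H v E F B023 ∨ LinkIso H v E F B033)}.ncard : ℝ))) with hK
  have hsetEq : {v : Vt | v ∉ M.biUnion id ∧
      ε * (Fintype.card Vt : ℝ)^2 ≤
        (({S : Finset (Finset Vt) | S ⊆ M ∧ S.card = 2 ∧
          ∃ E ∈ S, ∃ F ∈ S, E ≠ F ∧
            (LinkIso H v E F B023 ∨ LinkIso H v E F B033)}.ncard : ℝ))} = (↑K : Set Vt) := by
    ext v
    rw [hK]
    simp only [Finset.coe_filter, Finset.mem_univ, true_and, Set.mem_setOf_eq]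
  rw [hsetEq, Set.ncard_coe_finset] at hcon
  set n := Fintype.card Vt with hn
  set m := M.card with hm
  have h3m : 3 * m ≤ n := by
    have hb : (M.biUnion id).card = ∑ e ∈ M, (id e).card :=
      Finset.card_biUnion (fun x hx y hy hxy =>
        hdisj (Finset.mem_coe.mpr hx) (Finset.mem_coe.mpr hy) hxy)
    have hb2 : ∑ e ∈ M, (id e).card = 3 * m := by
      calc ∑ e ∈ M, (id e).card = ∑ _e ∈ M, 3 :=
            Finset.sum_congr rfl (fun e he => h3 e (hMH he))
        _ = 3 * m := by rw [Finset.sum_const, smul_eq_mul, mul_comm]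
    have hb3 : (M.biUnion id).card ≤ n :=
      le_trans (Finset.card_le_univ _) (le_of_eq Finset.card_univ)
    omega
  set good : Vt → Finset Vt × Finset Vt → Prop :=
    fun v p => LinkIso H v p.1 p.2 B023 ∨ LinkIso H v p.1 p.2 B033 with hgood
  set allPairs := (M ×ˢ M).filter (fun p => p.1 ≠ p.2) with hAP
  -- each bad vertex has many good ordered pairs
  have hGv : ∀ v ∈ K, ε * (n:ℝ)^2 ≤ ((allPairs.filter (fun p => good v p)).card : ℝ) := by
    intro v hv
    have hv2 := (Finset.mem_filter.mp hv).2.2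
    set SF : Finset (Finset (Finset Vt)) := Finset.univ.filter (fun S => S ⊆ M ∧ S.card = 2 ∧
      ∃ E ∈ S, ∃ F ∈ S, E ≠ F ∧
        (LinkIso H v E F B023 ∨ LinkIso H v E F B033)) with hSF
    have hv2' : ε * (n:ℝ)^2 ≤ (SF.card : ℝ) := by
      refine le_of_le_of_eq hv2 ?_
      have heq2 : {S : Finset (Finset Vt) | S ⊆ M ∧ S.card = 2 ∧
          ∃ E ∈ S, ∃ F ∈ S, E ≠ F ∧
            (LinkIso H v E F B023 ∨ LinkIso H v E F B033)} = (↑SF : Set (Finset (Finset Vt))) := by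
        ext S
        rw [hSF]
        simp only [Finset.coe_filter, Finset.mem_univ, true_and, Set.mem_setOf_eq]
      rw [heq2, Set.ncard_coe_finset]
    have himg : SF ⊆ (allPairs.filter (fun p => good v p)).image
        (fun p => ({p.1, p.2} : Finset (Finset Vt))) := by
      intro S hS
      obtain ⟨hsub, hc2, E, hE, F, hF, hEF, hiso⟩ := (Finset.mem_filter.mp hS).2
      refine Finset.mem_image.mpr ⟨(E, F), ?_, ?_⟩
      · exact Finset.mem_filter.mpr ⟨Finset.mem_filter.mpr
          ⟨Finset.mem_product.mpr ⟨hsub hE, hsub hF⟩, hEF⟩, hiso⟩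
      · have hsub2 : ({E, F} : Finset (Finset Vt)) ⊆ S := by
          intro x hx
          rcases Finset.mem_insert.mp hx with rfl | hx
          · exact hE
          · exact (Finset.mem_singleton.mp hx) ▸ hF
        have hcEF : ({E, F} : Finset (Finset Vt)).card = 2 := by
          rw [Finset.card_insert_of_notMem (by simpa using hEF), Finset.card_singleton]
        exact Finset.eq_of_subset_of_card_le hsub2 (le_of_eq (hc2.trans hcEF.symm))
    have hcard : SF.card ≤ (allPairs.filter (fun p => good v p)).card :=
      le_trans (Finset.card_le_card himg) Finset.card_image_le
    exact le_trans hv2' (by exact_mod_cast hcard)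
  have hswap : ∑ v ∈ K, (allPairs.filter (fun p => good v p)).card
      = ∑ p ∈ allPairs, (K.filter (fun v => good v p)).card := by
    simp only [Finset.card_filter]
    exact Finset.sum_comm
  have hklow : (K.card : ℝ) * (ε * (n:ℝ)^2)
      ≤ ((∑ p ∈ allPairs, (K.filter (fun v => good v p)).card : ℕ) : ℝ) := by
    rw [← hswap]
    push_cast
    calc (K.card : ℝ) * (ε * (n:ℝ)^2) = ∑ _v ∈ K, ε * (n:ℝ)^2 := by
          rw [Finset.sum_const, nsmul_eq_mul]
      _ ≤ ∑ v ∈ K, ((allPairs.filter (fun p => good v p)).card : ℝ) := Finset.sum_le_sum hGv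
  set A := allPairs.filter (fun p => 6 ≤ (K.filter (fun v => good v p)).card) with hA
  have hAsub : A ⊆ allPairs := Finset.filter_subset _ _
  have hAPm : allPairs.card ≤ m * m :=
    le_trans (Finset.card_filter_le _ _) (le_of_eq (Finset.card_product _ _))
  have hsplit : ∑ p ∈ allPairs, (K.filter (fun v => good v p)).card
      ≤ A.card * K.card + 5 * (m * m) := by
    have hdecomp : (∑ p ∈ A, (K.filter (fun v => good v p)).card)
        + ∑ p ∈ allPairs.filter (fun p => ¬ 6 ≤ (K.filter (fun v => good v p)).card),
            (K.filter (fun v => good v p)).card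
        = ∑ p ∈ allPairs, (K.filter (fun v => good v p)).card := by
      rw [hA]
      exact Finset.sum_filter_add_sum_filter_not _ _ _
    have t1 : ∑ p ∈ A, (K.filter (fun v => good v p)).card ≤ A.card * K.card := by
      calc ∑ p ∈ A, (K.filter (fun v => good v p)).card ≤ ∑ _p ∈ A, K.card :=
            Finset.sum_le_sum (fun p _ => Finset.card_le_card (Finset.filter_subset _ _))
        _ = A.card * K.card := by rw [Finset.sum_const, smul_eq_mul]
    have t2 : ∑ p ∈ allPairs.filter (fun p => ¬ 6 ≤ (K.filter (fun v => good v p)).card),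
        (K.filter (fun v => good v p)).card ≤ 5 * (m*m) := by
      calc ∑ p ∈ allPairs.filter (fun p => ¬ 6 ≤ (K.filter (fun v => good v p)).card),
          (K.filter (fun v => good v p)).card
          ≤ ∑ _p ∈ allPairs.filter (fun p => ¬ 6 ≤ (K.filter (fun v => good v p)).card), 5 :=
            Finset.sum_le_sum (fun p hp => by
              have h6 := (Finset.mem_filter.mp hp).2
              omega)
        _ = (allPairs.filter (fun p => ¬ 6 ≤ (K.filter (fun v => good v p)).card)).card * 5 := by
            rw [Finset.sum_const, smul_eq_mul]
        _ ≤ (m*m) * 5 := Nat.mul_le_mul_right _ (le_trans (Finset.card_filter_le _ _) hAPm)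
        _ = 5 * (m*m) := Nat.mul_comm _ _
    omega
  by_cases hK32 : ∃ Fa ∈ M, ∃ Fb ∈ M, Fa ≠ Fb ∧
      3 ≤ (M.filter (fun E => (E, Fa) ∈ A ∧ (E, Fb) ∈ A)).card
  · -- found a K_{3,2}: build an augmented matching, contradiction with maximality
    obtain ⟨Fa, hFaM, Fb, hFbM, hFab, hW⟩ := hK32
    obtain ⟨T, hTsub, hT3⟩ := Finset.exists_subset_card_eq hW
    obtain ⟨E1, E2, E3, h12, h13, h23, rfl⟩ := Finset.card_eq_three.mp hT3
    have c1 := Finset.mem_filter.mp (hTsub (show E1 ∈ ({E1, E2, E3} : Finset (Finset Vt)) by simp))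
    have c2 := Finset.mem_filter.mp (hTsub (show E2 ∈ ({E1, E2, E3} : Finset (Finset Vt)) by simp))
    have c3 := Finset.mem_filter.mp (hTsub (show E3 ∈ ({E1, E2, E3} : Finset (Finset Vt)) by simp))
    have nef : ∀ {p : Finset Vt × Finset Vt}, p ∈ A → p.1 ≠ p.2 :=
      fun {p} hp => (Finset.mem_filter.mp (hAsub hp)).2
    have pick : ∀ p ∈ A, ∀ used : Finset Vt, used.card ≤ 5 →
        ∃ v, v ∈ K ∧ good v p ∧ v ∉ used := by
      intro p hp used hused
      have h6 : 6 ≤ (K.filter (fun v => good v p)).card := (Finset.mem_filter.mp hp).2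
      have hpos : 0 < ((K.filter (fun v => good v p)) \ used).card := by
        have := Finset.le_card_sdiff used (K.filter (fun v => good v p))
        omega
      obtain ⟨v, hv⟩ := Finset.card_pos.mp hpos
      obtain ⟨hvK, hvnot⟩ := Finset.mem_sdiff.mp hv
      exact ⟨v, (Finset.mem_filter.mp hvK).1, (Finset.mem_filter.mp hvK).2, hvnot⟩
    obtain ⟨v11, k11, gg11, -⟩ := pick (E1, Fa) c1.2.1 ∅ (by simp)
    obtain ⟨v12, k12, gg12, n12⟩ := pick (E1, Fb) c1.2.2 [v11].toFinset
      (le_trans (List.toFinset_card_le _) (by simp))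
    obtain ⟨v21, k21, gg21, n21⟩ := pick (E2, Fa) c2.2.1 [v11, v12].toFinset
      (le_trans (List.toFinset_card_le _) (by simp))
    obtain ⟨v22, k22, gg22, n22⟩ := pick (E2, Fb) c2.2.2 [v11, v12, v21].toFinset
      (le_trans (List.toFinset_card_le _) (by simp))
    obtain ⟨v31, k31, gg31, n31⟩ := pick (E3, Fa) c3.2.1 [v11, v12, v21, v22].toFinset
      (le_trans (List.toFinset_card_le _) (by simp))
    obtain ⟨v32, k32, gg32, n32⟩ := pick (E3, Fb) c3.2.2 [v11, v12, v21, v22, v31].toFinset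
      (le_trans (List.toFinset_card_le _) (by simp))
    simp only [List.toFinset_cons, List.toFinset_nil, LawfulSingleton.insert_empty_eq, Finset.mem_insert,
      Finset.mem_singleton, not_or] at n12 n21 n22 n31 n32
    have uncov : ∀ v ∈ K, ∀ G ∈ M, v ∉ G := by
      intro v hv G hG hmem
      exact (Finset.mem_filter.mp hv).2.1 (Finset.mem_biUnion.mpr ⟨G, hG, hmem⟩)
    obtain ⟨M', hM'H, hM'd, hlt⟩ := augment h3 hMH hdisj c1.1 c2.1 c3.1 hFaM hFbM
      h12 h13 h23 (nef c1.2.1) (nef c1.2.2) (nef c2.2.1) (nef c2.2.2) (nef c3.2.1) (nef c3.2.2)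
      hFab
      (Ne.symm n12) (Ne.symm n21.1) (Ne.symm n22.1) (Ne.symm n31.1) (Ne.symm n32.1)
      (Ne.symm n21.2) (Ne.symm n22.2.1) (Ne.symm n31.2.1) (Ne.symm n32.2.1)
      (Ne.symm n22.2.2) (Ne.symm n31.2.2.1) (Ne.symm n32.2.2.1)
      (Ne.symm n31.2.2.2) (Ne.symm n32.2.2.2.1)
      (Ne.symm n32.2.2.2.2)
      (uncov _ k11) (uncov _ k12) (uncov _ k21) (uncov _ k22) (uncov _ k31) (uncov _ k32)
      gg11 gg12 gg21 gg22 gg31 gg32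
    exact absurd (hmax M' hM'H hM'd) (by omega)
  · -- no K_{3,2}: density contradiction
    push_neg at hK32
    set d : Finset Vt → ℕ := fun E => (A.filter (fun p => p.1 = E)).card with hd
    have hfst : ∀ p ∈ A, p.1 ∈ M :=
      fun p hp => (Finset.mem_product.mp (Finset.mem_filter.mp (hAsub hp)).1).1
    have hsnd : ∀ p ∈ A, p.2 ∈ M :=
      fun p hp => (Finset.mem_product.mp (Finset.mem_filter.mp (hAsub hp)).1).2
    have hdsum : ∑ E ∈ M, d E = A.card := (Finset.card_eq_sum_card_fiberwise hfst).symm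
    set P2 := (A ×ˢ A).filter (fun q => q.1.1 = q.2.1 ∧ q.1.2 ≠ q.2.2) with hP2
    have hP2mem : ∀ q ∈ P2, (q.1 ∈ A ∧ q.2 ∈ A) ∧ (q.1.1 = q.2.1 ∧ q.1.2 ≠ q.2.2) := by
      intro q hq
      have hh := Finset.mem_filter.mp hq
      exact ⟨Finset.mem_product.mp hh.1, hh.2⟩
    have hfib1 : P2.card = ∑ E ∈ M, (P2.filter (fun q => q.1.1 = E)).card :=
      Finset.card_eq_sum_card_fiberwise (fun q hq => hfst _ (hP2mem q hq).1.1)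
    have hfibeq : ∀ E ∈ M,
        (P2.filter (fun q => q.1.1 = E)) = (A.filter (fun p => p.1 = E)).offDiag := by
      intro E hE
      ext q
      simp only [hP2, Finset.mem_filter, Finset.mem_product, Finset.mem_offDiag]
      constructor
      · rintro ⟨⟨⟨hq1, hq2⟩, heq, hne2⟩, hfst1⟩
        exact ⟨⟨hq1, hfst1⟩, ⟨hq2, heq.symm.trans hfst1⟩, fun h => hne2 (by rw [h])⟩
      · rintro ⟨⟨hq1, hf1⟩, ⟨hq2, hf2⟩, hne'⟩
        exact ⟨⟨⟨hq1, hq2⟩, hf1.trans hf2.symm, fun h => hne' (Prod.ext (hf1.trans hf2.symm) h)⟩,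
          hf1⟩
    have hP2low : ∑ E ∈ M, (d E * d E - d E) = P2.card := by
      rw [hfib1]
      refine Finset.sum_congr rfl (fun E hE => ?_)
      rw [hfibeq E hE, Finset.offDiag_card]
    have hfib2 : P2.card = ∑ y ∈ M ×ˢ M, (P2.filter (fun q => (q.1.2, q.2.2) = y)).card :=
      Finset.card_eq_sum_card_fiberwise (fun q hq => Finset.mem_product.mpr
        ⟨hsnd q.1 (hP2mem q hq).1.1, hsnd q.2 (hP2mem q hq).1.2⟩)
    have fiber_le : ∀ y ∈ M ×ˢ M, (P2.filter (fun q => (q.1.2, q.2.2) = y)).card ≤ 2 := by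
      rintro ⟨Fa, Fb⟩ hy
      obtain ⟨hFaM, hFbM⟩ := Finset.mem_product.mp hy
      by_cases hab : Fa = Fb
      · have hempty : P2.filter (fun q => (q.1.2, q.2.2) = (Fa, Fb)) = ∅ := by
          refine Finset.filter_eq_empty_iff.mpr ?_
          intro q hq heq
          have h2 := (hP2mem q hq).2.2
          have e1 : q.1.2 = Fa := congrArg Prod.fst heq
          have e2 : q.2.2 = Fb := congrArg Prod.snd heq
          exact h2 (e1.trans (hab.trans e2.symm))
        rw [hempty]
        simp
      · have htarget : (P2.filter (fun q => (q.1.2, q.2.2) = (Fa, Fb))).card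
            ≤ (M.filter (fun E => (E, Fa) ∈ A ∧ (E, Fb) ∈ A)).card := by
          refine Finset.card_le_card_of_injOn (fun q => q.1.1) ?_ ?_
          · intro q hq
            obtain ⟨hqP2, hqy⟩ := Finset.mem_filter.mp hq
            obtain ⟨⟨hq1A, hq2A⟩, heq1, -⟩ := hP2mem q hqP2
            have e1 : q.1.2 = Fa := congrArg Prod.fst hqy
            have e2 : q.2.2 = Fb := congrArg Prod.snd hqy
            refine Finset.mem_filter.mpr ⟨hfst _ hq1A, ?_, ?_⟩
            · have hq1e : q.1 = (q.1.1, Fa) := Prod.ext rfl e1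
              rwa [← hq1e]
            · have hq2e : q.2 = (q.1.1, Fb) := Prod.ext heq1.symm e2
              rwa [← hq2e]
          · intro q hq q' hq' heq
            obtain ⟨hqP2, hqy⟩ := Finset.mem_filter.mp hq
            obtain ⟨hq'P2, hq'y⟩ := Finset.mem_filter.mp hq'
            obtain ⟨-, heq1, -⟩ := hP2mem q hqP2
            obtain ⟨-, heq1', -⟩ := hP2mem q' hq'P2
            have e1 : q.1.2 = Fa := congrArg Prod.fst hqy
            have e2 : q.2.2 = Fb := congrArg Prod.snd hqy
            have e1' : q'.1.2 = Fa := congrArg Prod.fst hq'y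
            have e2' : q'.2.2 = Fb := congrArg Prod.snd hq'y
            have hq1 : q.1 = q'.1 := Prod.ext heq (e1.trans e1'.symm)
            have hq2 : q.2 = q'.2 :=
              Prod.ext (heq1.symm.trans (heq.trans heq1')) (e2.trans e2'.symm)
            exact Prod.ext hq1 hq2
        have hcod := hK32 Fa hFaM Fb hFbM hab
        omega
    have hP2up : P2.card ≤ 2 * (m * m) := by
      rw [hfib2]
      calc ∑ y ∈ M ×ˢ M, (P2.filter (fun q => (q.1.2, q.2.2) = y)).card
          ≤ ∑ _y ∈ M ×ˢ M, 2 := Finset.sum_le_sum fiber_le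
        _ = (M ×ˢ M).card * 2 := by rw [Finset.sum_const, smul_eq_mul]
        _ = 2 * (m * m) := by rw [Finset.card_product]; ring
    have hsqsum : ∑ E ∈ M, d E * d E ≤ 2 * (m * m) + A.card := by
      have step : ∀ E ∈ M, d E * d E ≤ (d E * d E - d E) + d E := fun E _ => by omega
      calc ∑ E ∈ M, d E * d E ≤ ∑ E ∈ M, ((d E * d E - d E) + d E) := Finset.sum_le_sum step
        _ = (∑ E ∈ M, (d E * d E - d E)) + ∑ E ∈ M, d E := Finset.sum_add_distrib
        _ = P2.card + A.card := by rw [hP2low, hdsum]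
        _ ≤ 2 * (m * m) + A.card := Nat.add_le_add_right hP2up _
    have hcs : ((A.card : ℝ)) ^ 2 ≤ (m : ℝ) * (2 * ((m:ℝ) * m) + A.card) := by
      have h := Finset.sum_mul_sq_le_sq_mul_sq M (fun _ => (1:ℝ)) (fun E => (d E : ℝ))
      simp only [one_pow, one_mul] at h
      have e1 : (∑ E ∈ M, (d E : ℝ)) = (A.card : ℝ) := by exact_mod_cast hdsum
      have e3 : (∑ _E ∈ M, (1:ℝ)) = (m:ℝ) := by
        rw [Finset.sum_const, nsmul_eq_mul, mul_one, hm]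
      have e2 : (∑ E ∈ M, (d E : ℝ)^2) ≤ 2 * ((m:ℝ) * m) + A.card := by
        have : (∑ E ∈ M, (d E : ℝ)^2) = ((∑ E ∈ M, d E * d E : ℕ) : ℝ) := by
          push_cast
          exact Finset.sum_congr rfl (fun E _ => by ring)
        rw [this]
        exact_mod_cast hsqsum
      calc ((A.card : ℝ))^2 = (∑ E ∈ M, (d E : ℝ))^2 := by rw [e1]
        _ ≤ (∑ _E ∈ M, (1:ℝ)) * (∑ E ∈ M, (d E : ℝ)^2) := h
        _ = (m:ℝ) * (∑ E ∈ M, (d E : ℝ)^2) := by rw [e3]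
        _ ≤ (m:ℝ) * (2 * ((m:ℝ) * m) + A.card) := by
            refine mul_le_mul_of_nonneg_left e2 (Nat.cast_nonneg _)
    -- numeric endgame
    have hAcard : (A.card : ℝ) ≤ (m:ℝ) * m := by
      exact_mod_cast le_trans (Finset.card_le_card hAsub) hAPm
    have hkn : (K.card : ℝ) ≤ (n : ℝ) := by
      exact_mod_cast le_trans (Finset.card_le_univ K) (le_of_eq Finset.card_univ)
    have hkC : ((3:ℝ)/ε)^6 ≤ (K.card : ℝ) := by
      refine le_trans (Nat.le_ceil _) ?_
      exact_mod_cast le_of_lt hcon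
    have hmn : 3 * (m:ℝ) ≤ (n:ℝ) := by exact_mod_cast h3m
    have hsplitR : (K.card:ℝ) * (ε * (n:ℝ)^2) ≤ (A.card:ℝ) * K.card + 5*((m:ℝ)*m) := by
      refine le_trans hklow ?_
      have := hsplit
      exact_mod_cast this
    have hm0 : (0:ℝ) ≤ m := Nat.cast_nonneg _
    have hn0 : (0:ℝ) ≤ n := Nat.cast_nonneg _
    have hA0 : (0:ℝ) ≤ A.card := Nat.cast_nonneg _
    have ht27 : (27:ℝ) ≤ 3/ε := by
      rw [le_div_iff₀ hε]
      linarith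
    have htpow6 : (3/ε) ≤ (3/ε)^6 := by
      refine le_self_pow₀ (by linarith) (by norm_num)
    have hk27 : (27:ℝ) ≤ K.card := le_trans ht27 (le_trans htpow6 hkC)
    have hk0 : (0:ℝ) < K.card := by linarith
    have hεt : ε * (3/ε) = 3 := by field_simp
    have hεk : 3 * ((3/ε))^5 ≤ ε * K.card := by
      have h1 : ε * ((3/ε))^6 ≤ ε * K.card := mul_le_mul_of_nonneg_left hkC (le_of_lt hε)
      have h2 : ε * ((3/ε))^6 = 3 * ((3/ε))^5 := by
        rw [pow_succ']
        rw [← mul_assoc, hεt]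
      linarith
    have ht5 : (27:ℝ)^5 ≤ ((3/ε))^5 := pow_le_pow_left₀ (by norm_num) ht27 5
    have hmn2 : 9 * ((m:ℝ)*m) ≤ (n:ℝ)^2 := by nlinarith
    -- A is large
    have hek2 : (10:ℝ)/9 ≤ ε * K.card := by
      have h275 : (10:ℝ)/9 ≤ 3*(27:ℝ)^5 := by norm_num
      linarith
    have h59 : 5 * ((m:ℝ)*m) ≤ 5/9 * (n:ℝ)^2 := by linarith
    have h1x : (5:ℝ)/9 * (n:ℝ)^2 ≤ (ε * K.card / 2) * (n:ℝ)^2 := by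
      apply mul_le_mul_of_nonneg_right _ (sq_nonneg _)
      linarith
    have e : (K.card:ℝ) * (ε * (n:ℝ)^2)
        = (ε * K.card/2) * (n:ℝ)^2 + (ε * K.card/2)*(n:ℝ)^2 := by ring
    have e' : (ε * K.card/2) * (n:ℝ)^2 = (ε * (n:ℝ)^2/2) * K.card := by ring
    have key : (ε * (n:ℝ)^2/2) * K.card ≤ (A.card:ℝ) * K.card := by linarith
    have haR : ε * (n:ℝ)^2 / 2 ≤ (A.card : ℝ) := (mul_le_mul_iff_of_pos_right hk0).mp key
    -- A is small
    have hmcube : 27 * ((m:ℝ)*m*m) ≤ (n:ℝ)^3 := by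
      have h := pow_le_pow_left₀ (by positivity : (0:ℝ) ≤ 3*(m:ℝ)) hmn 3
      nlinarith [h]
    have ha3 : ((A.card:ℝ))^2 ≤ 3 * ((m:ℝ)*m*m) := by
      have hma : (m:ℝ) * (A.card:ℝ) ≤ (m:ℝ) * ((m:ℝ)*m) := mul_le_mul_of_nonneg_left hAcard hm0
      nlinarith [hcs]
    have hub : 9 * ((A.card:ℝ))^2 ≤ (n:ℝ)^3 := by linarith
    have hnK : ((3:ℝ)/ε)^6 ≤ (n:ℝ) := le_trans hkC hkn
    have hnpos : (0:ℝ) < n := by linarith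
    have hsq : (ε * (n:ℝ)^2/2)^2 ≤ ((A.card:ℝ))^2 := pow_le_pow_left₀ (by positivity) haR 2
    have hn4 : (9:ℝ)/4 * ε^2 * (n:ℝ)^4 ≤ (n:ℝ)^3 := by
      have hr : 9 * (ε * (n:ℝ)^2/2)^2 = 9/4 * ε^2 * (n:ℝ)^4 := by ring
      linarith
    have h3' : (0:ℝ) < (n:ℝ)^3 := pow_pos hnpos 3
    have hone : (9:ℝ)/4*ε^2*(n:ℝ) ≤ 1 := by
      have hx : (9:ℝ)/4*ε^2*(n:ℝ) * (n:ℝ)^3 ≤ 1 * (n:ℝ)^3 := by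
        calc (9:ℝ)/4*ε^2*(n:ℝ)*(n:ℝ)^3 = 9/4*ε^2*(n:ℝ)^4 := by ring
          _ ≤ (n:ℝ)^3 := hn4
          _ = 1*(n:ℝ)^3 := by ring
      exact le_of_mul_le_mul_right hx h3'
    have hlow : 729 / ε^4 ≤ ε^2 * (n:ℝ) := by
      have heq6 : ε^2 * ((3/ε)^6) = 729/ε^4 := by field_simp; ring
      have hmul := mul_le_mul_of_nonneg_left hnK (sq_nonneg ε)
      calc (729:ℝ)/ε^4 = ε^2 * ((3/ε)^6) := heq6.symm
        _ ≤ ε^2 * (n:ℝ) := by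
            have : ε^2 = ε^2 := rfl
            nlinarith [hmul, sq_nonneg ε]
    have hε4pos : (0:ℝ) < ε^4 := pow_pos hε 4
    have hbig : (729:ℝ) ≤ 4/9 * ε^4 := by
      have hc : 729 / ε^4 * ε^4 = 729 := by field_simp
      have hd2 : ε^2 * (n:ℝ) ≤ 4/9 := by nlinarith [hone]
      nlinarith [mul_le_mul_of_nonneg_right (le_trans hlow hd2) (le_of_lt hε4pos)]
    have hε41 : ε^4 ≤ 1 := by
      have := pow_le_pow_left₀ (le_of_lt hε) hε9 4
      norm_num at this
      linarith
    linarith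

/-- For every `ε > 0` there is a constant `C` such that for every
3-uniform hypergraph `H` on `n` vertices and every maximum matching `M` in `H`, at most
`C` uncovered vertices `v` admit at least `εn²` unordered pairs `{E,F}` of distinct edges
of `M` whose link graph `L_v(EF)` is isomorphic to `B₀₂₃` or to `B₀₃₃`. -/
theorem stmt_13 (ε : ℝ) (hε : 0 < ε) :
    ∃ C : ℕ, ∀ (Vt : Type) [Fintype Vt] [DecidableEq Vt] (H : Finset (Finset Vt)),
      (∀ e ∈ H, e.card = 3) →
      ∀ M ⊆ H, (M : Set (Finset Vt)).PairwiseDisjoint id →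
      (∀ M' ⊆ H, (M' : Set (Finset Vt)).PairwiseDisjoint id → M'.card ≤ M.card) →
      {v : Vt | v ∉ M.biUnion id ∧
        ε * (Fintype.card Vt : ℝ)^2 ≤
          (({S : Finset (Finset Vt) | S ⊆ M ∧ S.card = 2 ∧
            ∃ E ∈ S, ∃ F ∈ S, E ≠ F ∧
              (LinkIso H v E F B023 ∨ LinkIso H v E F B033)}.ncard : ℝ))}.ncard ≤ C := by
  obtain ⟨C, hC⟩ := stmt_13_aux (min ε (1/9)) (lt_min hε (by norm_num)) (min_le_right _ _)
  refine ⟨C, ?_⟩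
  intro Vt _ _ H h3 M hMH hdisj hmax
  refine le_trans (Set.ncard_le_ncard ?_ (Set.toFinite _)) (hC Vt H h3 M hMH hdisj hmax)
  intro v hv
  refine ⟨hv.1, le_trans ?_ hv.2⟩
  exact mul_le_mul_of_nonneg_right (min_le_left _ _) (by positivity)
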